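/- Let x₁, …, x_M be i.i.d. random vectors in ℝⁿ whose coordinates X₁, …, Xₙ are independent random variables satisfying 0 ≤ Xᵢ ≤ 1 with variances σᵢ² > σ₀² > 0, centralised so that each coordinate has zero mean. Set R₀² = Σᵢ σᵢ² ≥ n σ₀², and let 0 < δ < 2/3. Then P( 1 − δ ≤ ‖xⱼ‖²/R₀² ≤ 1 + δ for all j, and (xᵢ, xⱼ)/(R₀ ‖xⱼ‖) < √(1 − δ) for all i ≠ j ) ≥ 1 − 2M exp(−2δ² R₀⁴ / n) − M(M − 1) exp(−2 R₀⁴ (2 − 3δ)² / n). -/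

import Mathlib

set_option maxHeartbeats 1000000

open MeasureTheory ProbabilityTheory RealInnerProductSpace
open scoped ENNReal

/-- analytic core of Hoeffding's lemma -/
lemma ssp_aux_upos {p : ℝ} (hp0 : 0 ≤ p) (hp1 : p ≤ 1) (h : ℝ) :
    0 < 1 - p + p * Real.exp h := by
  rcases eq_or_lt_of_le hp1 with rfl | hlt
  · simpa using Real.exp_pos h
  · have : 0 ≤ p * Real.exp h := mul_nonneg hp0 (Real.exp_pos h).le
    linarith

lemma ssp_aux_L_le {p : ℝ} (hp0 : 0 ≤ p) (hp1 : p ≤ 1) (h : ℝ) :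
    -p * h + Real.log (1 - p + p * Real.exp h) ≤ h ^ 2 / 8 := by
  have hupos : ∀ x : ℝ, 0 < 1 - p + p * Real.exp x := fun x => ssp_aux_upos hp0 hp1 x
  have hud : ∀ x : ℝ, HasDerivAt (fun y => 1 - p + p * Real.exp y) (p * Real.exp x) x := by
    intro x
    simpa using ((Real.hasDerivAt_exp x).const_mul p).const_add (1 - p)
  set ψ : ℝ → ℝ := fun x => x / 4 + p - p * Real.exp x / (1 - p + p * Real.exp x) with hψ
  set φ : ℝ → ℝ := fun x => x ^ 2 / 8 + p * x - Real.log (1 - p + p * Real.exp x) with hφ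
  have hφd : ∀ x, HasDerivAt φ (ψ x) x := by
    intro x
    have hlog : HasDerivAt (fun y => Real.log (1 - p + p * Real.exp y))
        (p * Real.exp x / (1 - p + p * Real.exp x)) x := (hud x).log (hupos x).ne'
    have h1 : HasDerivAt (fun y : ℝ => y ^ 2 / 8 + p * y) (x / 4 + p) x := by
      have := ((hasDerivAt_pow 2 x).div_const 8).add ((hasDerivAt_id x).const_mul p)
      refine this.congr_deriv ?_
      ring
    exact h1.sub hlog
  have hψd : ∀ x, HasDerivAt ψ
      (1 / 4 - p * Real.exp x * (1 - p) / (1 - p + p * Real.exp x) ^ 2) x := by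
    intro x
    have he : HasDerivAt (fun y => p * Real.exp y) (p * Real.exp x) x :=
      (Real.hasDerivAt_exp x).const_mul p
    have hdiv := he.div (hud x) (hupos x).ne'
    have h1 : HasDerivAt (fun y : ℝ => y / 4 + p) (1 / 4) x := by
      simpa using ((hasDerivAt_id x).div_const 4).add_const p
    have h2 := h1.sub hdiv
    refine h2.congr_deriv ?_
    ring
  have hψmono : Monotone ψ := by
    apply monotone_of_deriv_nonneg
    · exact fun x => (hψd x).differentiableAt
    · intro x
      rw [(hψd x).deriv]
      have hsq : 4 * (p * Real.exp x * (1 - p)) ≤ (1 - p + p * Real.exp x) ^ 2 := by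
        nlinarith [sq_nonneg ((1 - p) - p * Real.exp x)]
      have hu2 : (0:ℝ) < (1 - p + p * Real.exp x) ^ 2 := pow_pos (hupos x) 2
      rw [sub_nonneg, div_le_iff₀ hu2]
      linarith
  have hψ0 : ψ 0 = 0 := by simp [hψ]
  have hφ0 : φ 0 = 0 := by simp [hφ]
  have hφdiff : Differentiable ℝ φ := fun x => (hφd x).differentiableAt
  have hφnonneg : ∀ x, 0 ≤ φ x := by
    intro x
    rcases le_or_gt 0 x with hx | hx
    · have hmono : MonotoneOn φ (Set.Ici 0) := by
        apply monotoneOn_of_deriv_nonneg (convex_Ici 0) hφdiff.continuous.continuousOn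
          (fun y _ => hφdiff y |>.differentiableWithinAt)
        intro y hy
        rw [(hφd y).deriv]
        have : (0:ℝ) ≤ y := by
          simp only [interior_Ici, Set.mem_Ioi] at hy; exact hy.le
        calc (0:ℝ) = ψ 0 := hψ0.symm
          _ ≤ ψ y := hψmono this
      have := hmono Set.self_mem_Ici (Set.mem_Ici.mpr hx) hx
      linarith [hφ0]
    · have hanti : AntitoneOn φ (Set.Iic 0) := by
        apply antitoneOn_of_deriv_nonpos (convex_Iic 0) hφdiff.continuous.continuousOn
          (fun y _ => hφdiff y |>.differentiableWithinAt)
        intro y hy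
        rw [(hφd y).deriv]
        have : y ≤ (0:ℝ) := by
          simp only [interior_Iic, Set.mem_Iio] at hy; exact hy.le
        calc ψ y ≤ ψ 0 := hψmono this
          _ = 0 := hψ0
      have := hanti (Set.mem_Iic.mpr hx.le) Set.self_mem_Iic hx.le
      linarith [hφ0]
  have := hφnonneg h
  simp only [hφ] at this
  linarith

/-- integrability from an a.e. interval bound on a probability space -/
lemma ssp_integrable_of_ae_Icc {α : Type*} [MeasurableSpace α] (μ : Measure α)
    [IsProbabilityMeasure μ] {f : α → ℝ} (hf : AEMeasurable f μ) {a b : ℝ}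
    (h : ∀ᵐ x ∂μ, f x ∈ Set.Icc a b) : Integrable f μ := by
  refine (integrable_const (max |a| |b|)).mono' hf.aestronglyMeasurable ?_
  filter_upwards [h] with x hx
  rw [Real.norm_eq_abs]
  rcases abs_cases (f x) with ⟨h1, _⟩ | ⟨h1, _⟩
  · rw [h1]; exact le_max_of_le_right (le_trans hx.2 (le_abs_self b))
  · rw [h1]
    refine le_max_of_le_left ?_
    rcases abs_cases a with ⟨ha, _⟩ | ⟨ha, _⟩ <;> linarith [hx.1]

/-- Hoeffding's lemma -/
lemma ssp_hoeffding_mgf {α : Type*} [MeasurableSpace α] (μ : Measure α) [IsProbabilityMeasure μ]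
    {Z : α → ℝ} (hZ : AEMeasurable Z μ) {a b : ℝ}
    (hab : ∀ᵐ x ∂μ, Z x ∈ Set.Icc a b) (hmean : ∫ x, Z x ∂μ = 0) (t : ℝ) :
    ∫ x, Real.exp (t * Z x) ∂μ ≤ Real.exp (t ^ 2 * (b - a) ^ 2 / 8) := by
  have hZint : Integrable Z μ := ssp_integrable_of_ae_Icc μ hZ hab
  have hale : a ≤ 0 := by
    have h1 := integral_mono_ae (integrable_const a) hZint (hab.mono fun x hx => hx.1)
    rwa [integral_const, probReal_univ, one_smul, hmean] at h1
  have hble : 0 ≤ b := by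
    have h2 := integral_mono_ae hZint (integrable_const b) (hab.mono fun x hx => hx.2)
    rwa [integral_const, probReal_univ, one_smul, hmean] at h2
  rcases eq_or_lt_of_le (hale.trans hble) with hab' | hab'
  · have ha0 : a = 0 := le_antisymm hale (hab' ▸ hble)
    have hb0 : b = 0 := hab' ▸ ha0
    have hZ0 : ∀ᵐ x ∂μ, Real.exp (t * Z x) = 1 := by
      filter_upwards [hab] with x hx
      rw [ha0, hb0] at hx
      have : Z x = 0 := le_antisymm hx.2 hx.1
      simp [this]
    rw [integral_congr_ae hZ0]
    simp only [integral_const, probReal_univ, one_smul, smul_eq_mul, mul_one]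
    exact Real.one_le_exp (by positivity)
  · set p : ℝ := -a / (b - a) with hp
    have hba : 0 < b - a := by linarith
    have hp0 : 0 ≤ p := div_nonneg (by linarith) hba.le
    have hp1 : p ≤ 1 := by rw [hp, div_le_one hba]; linarith
    set h : ℝ := t * (b - a) with hh
    have hpt : ∀ᵐ x ∂μ, Real.exp (t * Z x) ≤
        ((b - Z x) * Real.exp (t * a) + (Z x - a) * Real.exp (t * b)) / (b - a) := by
      filter_upwards [hab] with x hx
      have hl0 : 0 ≤ (b - Z x) / (b - a) := div_nonneg (by linarith [hx.2]) hba.le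
      have hl1 : 0 ≤ (Z x - a) / (b - a) := div_nonneg (by linarith [hx.1]) hba.le
      have hsum : (b - Z x) / (b - a) + (Z x - a) / (b - a) = 1 := by field_simp; ring
      have hcomb := convexOn_exp.2 (Set.mem_univ (t * a)) (Set.mem_univ (t * b)) hl0 hl1 hsum
      have harg : ((b - Z x) / (b - a)) • (t * a) + ((Z x - a) / (b - a)) • (t * b) = t * Z x := by
        simp only [smul_eq_mul]
        field_simp
        ring
      rw [harg] at hcomb
      simp only [smul_eq_mul] at hcomb
      calc Real.exp (t * Z x) ≤ (b - Z x) / (b - a) * Real.exp (t * a)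
            + (Z x - a) / (b - a) * Real.exp (t * b) := hcomb
        _ = ((b - Z x) * Real.exp (t * a) + (Z x - a) * Real.exp (t * b)) / (b - a) := by ring
    have hint1 : Integrable (fun x => Real.exp (t * Z x)) μ := by
      refine (integrable_const (Real.exp (|t| * max |a| |b|))).mono'
        ((Real.measurable_exp.comp (measurable_const.mul measurable_id)).comp_aemeasurable
          hZ).aestronglyMeasurable ?_
      filter_upwards [hab] with x hx
      rw [Real.norm_eq_abs, abs_of_pos (Real.exp_pos _)]
      apply Real.exp_le_exp.mpr
      calc t * Z x ≤ |t * Z x| := le_abs_self _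
        _ = |t| * |Z x| := abs_mul t (Z x)
        _ ≤ |t| * max |a| |b| := by
            apply mul_le_mul_of_nonneg_left _ (abs_nonneg t)
            rcases abs_cases (Z x) with ⟨h1, _⟩ | ⟨h1, _⟩
            · rw [h1]; exact le_max_of_le_right (le_trans hx.2 (le_abs_self b))
            · rw [h1]; exact le_max_of_le_left (by rw [abs_of_nonpos hale]; linarith [hx.1])
    have hfun : (fun x => ((b - Z x) * Real.exp (t * a) + (Z x - a) * Real.exp (t * b)) / (b - a))
        = fun x => (b * Real.exp (t * a) - a * Real.exp (t * b)) / (b - a)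
          + ((Real.exp (t * b) - Real.exp (t * a)) / (b - a)) * Z x := by
      funext x; field_simp; ring
    have hint2 : Integrable (fun x => (b * Real.exp (t * a) - a * Real.exp (t * b)) / (b - a)
          + ((Real.exp (t * b) - Real.exp (t * a)) / (b - a)) * Z x) μ :=
      (integrable_const _).add (hZint.const_mul _)
    have hint2' : Integrable
        (fun x => ((b - Z x) * Real.exp (t * a) + (Z x - a) * Real.exp (t * b)) / (b - a)) μ := by
      rw [hfun]; exact hint2
    have hIle := integral_mono_ae hint1 hint2' hpt
    rw [hfun, integral_add (integrable_const _) (hZint.const_mul _), integral_const_mul, hmean,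
      integral_const, probReal_univ, one_smul, mul_zero, add_zero] at hIle
    have hkey : (b * Real.exp (t * a) - a * Real.exp (t * b)) / (b - a)
        = Real.exp (-p * h + Real.log (1 - p + p * Real.exp h)) := by
      rw [Real.exp_add, Real.exp_log (ssp_aux_upos hp0 hp1 h)]
      have h1 : -p * h = t * a := by rw [hp, hh]; field_simp
      rw [h1]
      have h2 : 1 - p + p * Real.exp h = (b - a * Real.exp h) / (b - a) := by
        rw [hp]; field_simp; ring
      rw [h2]
      have hexp : Real.exp (t * b) = Real.exp (t * a) * Real.exp h := by
        rw [← Real.exp_add]; congr 1; rw [hh]; ring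
      rw [hexp]
      field_simp
    rw [hkey] at hIle
    refine hIle.trans (Real.exp_le_exp.mpr ?_)
    calc -p * h + Real.log (1 - p + p * Real.exp h) ≤ h ^ 2 / 8 := ssp_aux_L_le hp0 hp1 h
      _ = t ^ 2 * (b - a) ^ 2 / 8 := by rw [hh]; ring

/-- Hoeffding's inequality on a finite product of probability spaces -/
lemma ssp_hoeffding_pi {n : ℕ} (hn : 0 < n) {α : Fin n → Type*} [∀ i, MeasurableSpace (α i)]
    (μ : ∀ i, Measure (α i)) [∀ i, IsProbabilityMeasure (μ i)]
    (g : ∀ i, α i → ℝ) (hg : ∀ i, Measurable (g i))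
    (a b : Fin n → ℝ) (hab1 : ∀ i, b i - a i ≤ 1)
    (hbd : ∀ i, ∀ᵐ x ∂(μ i), g i x ∈ Set.Icc (a i) (b i))
    (τ : ℝ) (hτ : 0 ≤ τ) :
    Measure.pi μ {y | (∑ i, ∫ x, g i x ∂(μ i)) + τ ≤ ∑ i, g i (y i)}
      ≤ ENNReal.ofReal (Real.exp (-2 * τ ^ 2 / n)) := by
  set m : Fin n → ℝ := fun i => ∫ x, g i x ∂(μ i) with hm
  set S : (∀ i, α i) → ℝ := fun y => ∑ i, (g i (y i) - m i) with hS
  have hSmeas : Measurable S := by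
    apply Finset.measurable_sum
    intro i _
    exact ((hg i).comp (measurable_pi_apply i)).sub measurable_const
  set t : ℝ := 4 * τ / n with ht
  have htpos : 0 ≤ t := by positivity
  have hbd_pi : ∀ i : Fin n, ∀ᵐ y ∂(Measure.pi μ), g i (y i) ∈ Set.Icc (a i) (b i) := fun i =>
    Measure.tendsto_eval_ae_ae.eventually (hbd i)
  have hbd_all : ∀ᵐ y ∂(Measure.pi μ), ∀ i, g i (y i) ∈ Set.Icc (a i) (b i) :=
    (ae_all_iff).2 hbd_pi
  have hSbd : ∀ᵐ y ∂(Measure.pi μ), |S y| ≤ ∑ i, (|a i| + |b i| + |m i|) := by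
    filter_upwards [hbd_all] with y hy
    rw [hS]
    refine (Finset.abs_sum_le_sum_abs _ _).trans (Finset.sum_le_sum fun i _ => ?_)
    have h1 := (hy i).1
    have h2 := (hy i).2
    rcases abs_cases (g i (y i) - m i) with ⟨he, _⟩ | ⟨he, _⟩ <;> rw [he] <;>
      [skip; skip] <;>
      rcases abs_cases (a i) with ⟨ha, _⟩ | ⟨ha, _⟩ <;>
      rcases abs_cases (b i) with ⟨hb, _⟩ | ⟨hb, _⟩ <;>
      rcases abs_cases (m i) with ⟨hmm, _⟩ | ⟨hmm, _⟩ <;> linarith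
  have hint : Integrable (fun y => Real.exp (t * S y)) (Measure.pi μ) := by
    refine (integrable_const (Real.exp (t * ∑ i, (|a i| + |b i| + |m i|)))).mono'
      ((hSmeas.const_mul t).exp).aestronglyMeasurable ?_
    filter_upwards [hSbd] with y hy
    rw [Real.norm_eq_abs, abs_of_pos (Real.exp_pos _)]
    apply Real.exp_le_exp.mpr
    calc t * S y ≤ t * |S y| := by
          apply mul_le_mul_of_nonneg_left (le_abs_self _) htpos
      _ ≤ _ := mul_le_mul_of_nonneg_left hy htpos
  have hcher := measure_ge_le_exp_mul_mgf (μ := Measure.pi μ) (X := S) τ htpos hint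
  have hmgf : mgf S (Measure.pi μ) t ≤ Real.exp (n * t ^ 2 / 8) := by
    have hfac : mgf S (Measure.pi μ) t = ∏ i, ∫ x, Real.exp (t * (g i x - m i)) ∂(μ i) := by
      rw [mgf]
      have : (fun y => Real.exp (t * S y)) =
          fun y => ∏ i, Real.exp (t * (g i (y i) - m i)) := by
        funext y
        rw [hS, ← Real.exp_sum]
        congr 1
        rw [Finset.mul_sum]
      rw [this]
      letI : ∀ i, MeasureSpace (α i) := fun i => ⟨μ i⟩
      exact MeasureTheory.integral_fintype_prod_eq_prod
        (fun i x => Real.exp (t * (g i x - m i)))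
    rw [hfac]
    calc ∏ i, ∫ x, Real.exp (t * (g i x - m i)) ∂(μ i)
        ≤ ∏ i, Real.exp (t ^ 2 * (b i - a i) ^ 2 / 8) := by
          apply Finset.prod_le_prod
          · intro i _
            positivity
          · intro i _
            have hh := ssp_hoeffding_mgf (μ i) (Z := fun x => g i x - m i)
              (((hg i).sub measurable_const).aemeasurable)
              (a := a i - m i) (b := b i - m i) ?_ ?_ t
            · refine hh.trans (le_of_eq ?_)
              congr 1
              ring
            · filter_upwards [hbd i] with x hx
              exact ⟨by linarith [hx.1], by linarith [hx.2]⟩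
            · rw [integral_sub (by
                  refine (integrable_const (max |a i| |b i|)).mono'
                    (hg i).aestronglyMeasurable ?_
                  filter_upwards [hbd i] with x hx
                  rw [Real.norm_eq_abs]
                  rcases abs_cases (g i x) with ⟨h1, _⟩ | ⟨h1, _⟩
                  · rw [h1]; exact le_max_of_le_right (le_trans hx.2 (le_abs_self _))
                  · rw [h1]
                    refine le_max_of_le_left ?_
                    rcases abs_cases (a i) with ⟨ha, _⟩ | ⟨ha, _⟩ <;> linarith [hx.1])
                (integrable_const _), integral_const, probReal_univ, one_smul]
              simp [hm]
      _ ≤ ∏ _i : Fin n, Real.exp (t ^ 2 / 8) := by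
          apply Finset.prod_le_prod
          · intro i _; positivity
          · intro i _
            apply Real.exp_le_exp.mpr
            have h1 : (b i - a i) ^ 2 ≤ 1 := by
              have h0 : 0 ≤ (b i - a i) := by
                by_contra hc
                push_neg at hc
                have hfalse : ∀ᵐ x ∂(μ i), False := by
                  filter_upwards [hbd i] with x hx
                  rw [Set.Icc_eq_empty (by linarith : ¬ a i ≤ b i)] at hx
                  exact hx
                obtain ⟨x, hx⟩ := hfalse.exists
                exact hx
              nlinarith [hab1 i]
            nlinarith [sq_nonneg t]
      _ = Real.exp (n * t ^ 2 / 8) := by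
          rw [Finset.prod_const, ← Real.exp_nat_mul]
          congr 1
          simp [Finset.card_univ]
          ring
  have hfin : (Measure.pi μ {y | (∑ i, m i) + τ ≤ ∑ i, g i (y i)}).toReal
      ≤ Real.exp (-2 * τ ^ 2 / n) := by
    have hset : {y | (∑ i, m i) + τ ≤ ∑ i, g i (y i)} = {y | τ ≤ S y} := by
      ext y
      simp only [Set.mem_setOf_eq, hS, Finset.sum_sub_distrib]
      constructor <;> intro h <;> linarith
    rw [hset]
    refine hcher.trans ?_
    calc Real.exp (-t * τ) * mgf S (Measure.pi μ) t
        ≤ Real.exp (-t * τ) * Real.exp (n * t ^ 2 / 8) := by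
          apply mul_le_mul_of_nonneg_left hmgf (Real.exp_pos _).le
      _ = Real.exp (-t * τ + n * t ^ 2 / 8) := (Real.exp_add _ _).symm
      _ ≤ Real.exp (-2 * τ ^ 2 / n) := by
          apply Real.exp_le_exp.mpr
          have hn' : (0:ℝ) < n := Nat.cast_pos.mpr hn
          have : -t * τ + ↑n * t ^ 2 / 8 = -2 * τ ^ 2 / ↑n := by
            rw [ht]
            field_simp
            ring
          rw [this]
  have hne : Measure.pi μ {y | (∑ i, m i) + τ ≤ ∑ i, g i (y i)} ≠ ⊤ := measure_ne_top _ _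
  rw [← ENNReal.ofReal_toReal hne]
  exact ENNReal.ofReal_le_ofReal hfin

/-- Theorem 3, inequality (13) (product distribution in a cube): for i.i.d. vectors
whose coordinates are independent, take values in `[0,1]` before centralisation, have
zero mean after centralisation and variances `σᵢ² > σ₀² > 0`, with `R₀² = Σᵢ σᵢ²` and
`0 < δ < 2/3`, the norms concentrate and all points are pairwise separated with
probability at least `1 - 2M exp(-2δ²R₀⁴/n) - M(M-1) exp(-2R₀⁴(2-3δ)²/n)`. -/
theorem stochastic_separation_product_cube_all
    (n M : ℕ) (hn : 0 < n) (hM : 0 < M)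
    (σ : Fin n → ℝ) (σ₀ : ℝ) (hσ₀ : 0 < σ₀) (hσ : ∀ i, σ₀ ^ 2 < σ i ^ 2)
    (m : Fin n → ℝ) (ν : Fin n → Measure ℝ) (hνprob : ∀ i, IsProbabilityMeasure (ν i))
    (hsupp : ∀ i, ν i {x : ℝ | x + m i ∈ Set.Icc (0 : ℝ) 1} = 1)
    (hmean : ∀ i, ∫ x, x ∂(ν i) = 0)
    (hvar : ∀ i, ∫ x, x ^ 2 ∂(ν i) = σ i ^ 2)
    (R₀ : ℝ) (hR₀pos : 0 < R₀) (hR₀ : R₀ ^ 2 = ∑ i, σ i ^ 2)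
    (δ : ℝ) (hδ : 0 < δ) (hδ1 : δ < 2 / 3)
    (Ω : Type*) [MeasurableSpace Ω] (P : Measure Ω) [IsProbabilityMeasure P]
    (X : Fin M → Ω → EuclideanSpace ℝ (Fin n))
    (hmeas : ∀ i, Measurable (X i))
    (hindep : iIndepFun X P)
    (hdist : ∀ i, Measure.map (X i) P =
      (Measure.pi ν).map (MeasurableEquiv.toLp 2 (Fin n → ℝ))) :
    (P {ω | (∀ j : Fin M, 1 - δ ≤ ‖X j ω‖ ^ 2 / R₀ ^ 2 ∧ ‖X j ω‖ ^ 2 / R₀ ^ 2 ≤ 1 + δ) ∧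
        ∀ i j : Fin M, i ≠ j →
          ⟪X i ω, X j ω⟫ / (R₀ * ‖X j ω‖) < Real.sqrt (1 - δ)}).toReal ≥
      1 - 2 * (M : ℝ) * Real.exp (-2 * δ ^ 2 * R₀ ^ 4 / n) -
        (M : ℝ) * ((M : ℝ) - 1) * Real.exp (-2 * R₀ ^ 4 * (2 - 3 * δ) ^ 2 / n) := by
  classical
  haveI : ∀ i, IsProbabilityMeasure (ν i) := hνprob
  set e := MeasurableEquiv.toLp 2 (Fin n → ℝ) with he
  set e₁ : ℝ := Real.exp (-2 * δ ^ 2 * R₀ ^ 4 / n) with he₁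
  set e₂ : ℝ := Real.exp (-2 * R₀ ^ 4 * (2 - 3 * δ) ^ 2 / n) with he₂
  -- norm squared as coordinate sum
  have hnormsq : ∀ v : EuclideanSpace ℝ (Fin n), ‖v‖ ^ 2 = ∑ i, (v i) ^ 2 := by
    intro v
    rw [EuclideanSpace.norm_eq, Real.sq_sqrt (by positivity)]
    exact Finset.sum_congr rfl fun i _ => by rw [Real.norm_eq_abs, sq_abs]
  -- support facts
  have hsIcc : ∀ i, ν i (Set.Icc (-(m i)) (1 - m i)) = 1 := by
    intro i
    have : {x : ℝ | x + m i ∈ Set.Icc (0 : ℝ) 1} = Set.Icc (-(m i)) (1 - m i) := by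
      ext x
      simp only [Set.mem_setOf_eq, Set.mem_Icc]
      constructor <;> intro h <;> constructor <;> linarith [h.1, h.2]
    rw [← this]
    exact hsupp i
  have hae : ∀ i, ∀ᵐ x ∂(ν i), x ∈ Set.Icc (-(m i)) (1 - m i) := by
    intro i
    rw [Filter.eventually_iff, mem_ae_iff]
    simp only [Set.setOf_mem_eq]
    rw [measure_compl measurableSet_Icc (measure_ne_top _ _), hsIcc i, measure_univ]
    simp
  have hxint : ∀ i, Integrable (fun x : ℝ => x) (ν i) := fun i =>
    ssp_integrable_of_ae_Icc (ν i) aemeasurable_id (hae i)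
  have hm0 : ∀ i, 0 ≤ m i := by
    intro i
    have h1 := integral_mono_ae (integrable_const (-(m i))) (hxint i)
      ((hae i).mono fun x hx => hx.1)
    rw [integral_const, probReal_univ, one_smul, hmean i] at h1
    linarith
  have hm1 : ∀ i, m i ≤ 1 := by
    intro i
    have h1 := integral_mono_ae (hxint i) (integrable_const (1 - m i))
      ((hae i).mono fun x hx => hx.2)
    rw [integral_const, probReal_univ, one_smul, hmean i] at h1
    linarith
  have hbx : ∀ i, ∀ᵐ x ∂(ν i), x ^ 2 ∈ Set.Icc (0:ℝ) 1 := by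
    intro i
    filter_upwards [hae i] with x hx
    constructor
    · positivity
    · nlinarith [hx.1, hx.2, hm0 i, hm1 i]
  -- the three Hoeffding bounds on canonical spaces
  have hup : Measure.pi ν {y : Fin n → ℝ | (1 + δ) * R₀ ^ 2 ≤ ∑ i, (y i) ^ 2}
      ≤ ENNReal.ofReal e₁ := by
    have h := ssp_hoeffding_pi hn ν (fun _ x => x ^ 2)
      (fun _ => measurable_id.pow_const 2) (fun _ => 0) (fun _ => 1)
      (fun _ => by norm_num) hbx (δ * R₀ ^ 2) (by positivity)
    have hset : {y : Fin n → ℝ | (∑ i, ∫ x, x ^ 2 ∂(ν i)) + δ * R₀ ^ 2 ≤ ∑ i, (y i) ^ 2}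
        = {y : Fin n → ℝ | (1 + δ) * R₀ ^ 2 ≤ ∑ i, (y i) ^ 2} := by
      ext y
      simp only [Set.mem_setOf_eq, hvar, ← hR₀]
      constructor <;> intro hh <;> nlinarith [hh]
    rw [hset] at h
    refine h.trans (le_of_eq ?_)
    congr 1
    rw [he₁]
    congr 1
    ring
  have hlo : Measure.pi ν {y : Fin n → ℝ | ∑ i, (y i) ^ 2 ≤ (1 - δ) * R₀ ^ 2}
      ≤ ENNReal.ofReal e₁ := by
    have h := ssp_hoeffding_pi hn ν (fun _ x => -(x ^ 2))
      (fun _ => (measurable_id.pow_const 2).neg) (fun _ => -1) (fun _ => 0)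
      (fun _ => by norm_num)
      (fun i => by filter_upwards [hbx i] with x hx; exact ⟨by linarith [hx.2], by linarith [hx.1]⟩)
      (δ * R₀ ^ 2) (by positivity)
    have hset : {y : Fin n → ℝ | (∑ i, ∫ x, -(x ^ 2) ∂(ν i)) + δ * R₀ ^ 2 ≤ ∑ i, -((y i) ^ 2)}
        = {y : Fin n → ℝ | ∑ i, (y i) ^ 2 ≤ (1 - δ) * R₀ ^ 2} := by
      ext y
      simp only [Set.mem_setOf_eq, integral_neg, hvar, Finset.sum_neg_distrib, ← hR₀]
      constructor <;> intro hh <;> nlinarith [hh]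
    rw [hset] at h
    refine h.trans (le_of_eq ?_)
    congr 1
    rw [he₁]
    congr 1
    ring
  -- pair bound
  have hbz : ∀ i, ∀ᵐ z ∂((ν i).prod (ν i)),
      z ∈ Set.Icc (-(m i)) (1 - m i) ×ˢ Set.Icc (-(m i)) (1 - m i) := by
    intro i
    rw [Filter.eventually_iff, mem_ae_iff]
    simp only [Set.setOf_mem_eq]
    rw [measure_compl (measurableSet_Icc.prod measurableSet_Icc) (measure_ne_top _ _),
      Measure.prod_prod, hsIcc i, one_mul, measure_univ]
    simp
  have hx2int : ∀ i, Integrable (fun x : ℝ => x ^ 2) (ν i) := fun i =>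
    ssp_integrable_of_ae_Icc (ν i) (measurable_id.pow_const 2).aemeasurable (hbx i)
  have hmean2 : ∀ i, ∫ z, -((z.1 - z.2) ^ 2) ∂((ν i).prod (ν i)) = -(2 * σ i ^ 2) := by
    intro i
    rw [integral_neg, neg_inj]
    have hinner : ∀ x : ℝ, ∫ y, (x - y) ^ 2 ∂(ν i) = x ^ 2 + σ i ^ 2 := by
      intro x
      have hfun : (fun y : ℝ => (x - y) ^ 2) = fun y => (x ^ 2 + (-(2 * x)) * y) + y ^ 2 := by
        funext y; ring
      have i1 : Integrable (fun y : ℝ => x ^ 2 + -(2 * x) * y) (ν i) :=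
        (integrable_const _).add ((hxint i).const_mul _)
      rw [hfun, integral_add i1 (hx2int i),
        integral_add (integrable_const _) ((hxint i).const_mul _), integral_const,
        integral_const_mul, hmean i, hvar i, probReal_univ]
      simp
    have hfint : Integrable (fun z : ℝ × ℝ => (z.1 - z.2) ^ 2) ((ν i).prod (ν i)) := by
      apply ssp_integrable_of_ae_Icc _
        ((measurable_fst.sub measurable_snd).pow_const 2).aemeasurable (a := 0) (b := 1)
      filter_upwards [hbz i] with z hz
      obtain ⟨⟨h1, h2⟩, ⟨h3, h4⟩⟩ := hz
      constructor
      · positivity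
      · simp only [Pi.sub_apply]
        nlinarith [hm0 i, hm1 i]
    rw [integral_prod _ hfint]
    simp only [hinner]
    rw [integral_add (hx2int i) (integrable_const _), integral_const, hvar i, probReal_univ]
    simp
    ring
  have hpair : Measure.pi (fun i => (ν i).prod (ν i))
      {w : Fin n → ℝ × ℝ | ∑ i, ((w i).1 - (w i).2) ^ 2 ≤ 3 * δ * R₀ ^ 2}
      ≤ ENNReal.ofReal e₂ := by
    have h := ssp_hoeffding_pi hn (fun i => (ν i).prod (ν i)) (fun _ z => -((z.1 - z.2) ^ 2))
      (fun _ => ((measurable_fst.sub measurable_snd).pow_const 2).neg)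
      (fun _ => -1) (fun _ => 0) (fun _ => by norm_num)
      (fun i => by
        filter_upwards [hbz i] with z hz
        obtain ⟨⟨h1, h2⟩, ⟨h3, h4⟩⟩ := hz
        constructor
        · simp only [neg_le_neg_iff]
          nlinarith [hm0 i, hm1 i]
        · simp only [neg_nonpos]
          positivity)
      ((2 - 3 * δ) * R₀ ^ 2) (by nlinarith)
    have hset : {w : Fin n → ℝ × ℝ |
          (∑ i, ∫ z, -((z.1 - z.2) ^ 2) ∂((ν i).prod (ν i))) + (2 - 3 * δ) * R₀ ^ 2
            ≤ ∑ i, -(((w i).1 - (w i).2) ^ 2)}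
        = {w : Fin n → ℝ × ℝ | ∑ i, ((w i).1 - (w i).2) ^ 2 ≤ 3 * δ * R₀ ^ 2} := by
      ext w
      simp only [Set.mem_setOf_eq, hmean2, Finset.sum_neg_distrib, ← Finset.mul_sum, ← hR₀]
      constructor <;> intro hh <;> nlinarith [hh]
    rw [hset] at h
    refine h.trans (le_of_eq ?_)
    congr 1
    rw [he₂]
    congr 1
    ring
  -- transport to Ω: single-vector events
  have hcoord : ∀ (y : Fin n → ℝ) (i : Fin n), (e y) i = y i := fun y i => rfl
  have hTup : MeasurableSet {v : EuclideanSpace ℝ (Fin n) | (1 + δ) * R₀ ^ 2 ≤ ‖v‖ ^ 2} :=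
    measurableSet_le measurable_const (measurable_norm.pow_const 2)
  have hTlo : MeasurableSet {v : EuclideanSpace ℝ (Fin n) | ‖v‖ ^ 2 ≤ (1 - δ) * R₀ ^ 2} :=
    measurableSet_le (measurable_norm.pow_const 2) measurable_const
  have hPup : ∀ j, P {ω | (1 + δ) * R₀ ^ 2 ≤ ‖X j ω‖ ^ 2} ≤ ENNReal.ofReal e₁ := by
    intro j
    have hpre : {ω | (1 + δ) * R₀ ^ 2 ≤ ‖X j ω‖ ^ 2}
        = X j ⁻¹' {v | (1 + δ) * R₀ ^ 2 ≤ ‖v‖ ^ 2} := rfl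
    rw [hpre, ← Measure.map_apply (hmeas j) hTup, hdist j,
      Measure.map_apply e.measurable hTup]
    have hseteq : e ⁻¹' {v : EuclideanSpace ℝ (Fin n) | (1 + δ) * R₀ ^ 2 ≤ ‖v‖ ^ 2}
        = {y : Fin n → ℝ | (1 + δ) * R₀ ^ 2 ≤ ∑ i, (y i) ^ 2} := by
      ext y
      simp only [Set.mem_preimage, Set.mem_setOf_eq, hnormsq, hcoord]
    rw [hseteq]
    exact hup
  have hPlo : ∀ j, P {ω | ‖X j ω‖ ^ 2 ≤ (1 - δ) * R₀ ^ 2} ≤ ENNReal.ofReal e₁ := by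
    intro j
    have hpre : {ω | ‖X j ω‖ ^ 2 ≤ (1 - δ) * R₀ ^ 2}
        = X j ⁻¹' {v | ‖v‖ ^ 2 ≤ (1 - δ) * R₀ ^ 2} := rfl
    rw [hpre, ← Measure.map_apply (hmeas j) hTlo, hdist j,
      Measure.map_apply e.measurable hTlo]
    have hseteq : e ⁻¹' {v : EuclideanSpace ℝ (Fin n) | ‖v‖ ^ 2 ≤ (1 - δ) * R₀ ^ 2}
        = {y : Fin n → ℝ | ∑ i, (y i) ^ 2 ≤ (1 - δ) * R₀ ^ 2} := by
      ext y
      simp only [Set.mem_preimage, Set.mem_setOf_eq, hnormsq, hcoord]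
    rw [hseteq]
    exact hlo
  -- transport to Ω: pair events
  have hT₂ : MeasurableSet {p : EuclideanSpace ℝ (Fin n) × EuclideanSpace ℝ (Fin n) |
      ‖p.1 - p.2‖ ^ 2 ≤ 3 * δ * R₀ ^ 2} :=
    measurableSet_le (((measurable_fst.sub measurable_snd).norm).pow_const 2) measurable_const
  have hPpair : ∀ i j : Fin M, i ≠ j →
      P {ω | ‖X i ω - X j ω‖ ^ 2 ≤ 3 * δ * R₀ ^ 2} ≤ ENNReal.ofReal e₂ := by
    intro i j hij
    have hIF : IndepFun (X i) (X j) P := hindep.indepFun hij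
    have hmap := (ProbabilityTheory.indepFun_iff_map_prod_eq_prod_map_map
      (hmeas i).aemeasurable (hmeas j).aemeasurable).mp hIF
    have hpre : {ω | ‖X i ω - X j ω‖ ^ 2 ≤ 3 * δ * R₀ ^ 2}
        = (fun ω => (X i ω, X j ω)) ⁻¹' {p : EuclideanSpace ℝ (Fin n) × EuclideanSpace ℝ (Fin n) |
            ‖p.1 - p.2‖ ^ 2 ≤ 3 * δ * R₀ ^ 2} := rfl
    rw [hpre, ← Measure.map_apply ((hmeas i).prodMk (hmeas j)) hT₂, hmap, hdist i, hdist j,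
      Measure.map_prod_map _ _ e.measurable e.measurable,
      Measure.map_apply (e.measurable.prodMap e.measurable) hT₂,
      ← (measurePreserving_arrowProdEquivProdArrow ℝ ℝ (Fin n) ν ν).measure_preimage
        ((hT₂.preimage (e.measurable.prodMap e.measurable)).nullMeasurableSet)]
    have hseteq : (MeasurableEquiv.arrowProdEquivProdArrow ℝ ℝ (Fin n)) ⁻¹'
          ((Prod.map e e) ⁻¹' {p : EuclideanSpace ℝ (Fin n) × EuclideanSpace ℝ (Fin n) |
            ‖p.1 - p.2‖ ^ 2 ≤ 3 * δ * R₀ ^ 2})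
        = {w : Fin n → ℝ × ℝ | ∑ k, ((w k).1 - (w k).2) ^ 2 ≤ 3 * δ * R₀ ^ 2} := by
      ext w
      simp only [Set.mem_preimage, Set.mem_setOf_eq, MeasurableEquiv.arrowProdEquivProdArrow,
        Equiv.arrowProdEquivProdArrow, MeasurableEquiv.coe_mk, Equiv.coe_fn_mk, Prod.map,
        hnormsq]
      have hc : ∀ k : Fin n, (e (fun c => (w c).1) - e (fun c => (w c).2)) k
          = (w k).1 - (w k).2 := fun k => rfl
      simp only [hc]
    rw [hseteq]
    exact hpair
  -- bad events in Ω
  set Bup : Fin M → Set Ω := fun j => {ω | (1 + δ) * R₀ ^ 2 ≤ ‖X j ω‖ ^ 2} with hBup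
  set Blo : Fin M → Set Ω := fun j => {ω | ‖X j ω‖ ^ 2 ≤ (1 - δ) * R₀ ^ 2} with hBlo
  set Bp : Fin M → Fin M → Set Ω := fun i j => {ω | ‖X i ω - X j ω‖ ^ 2 ≤ 3 * δ * R₀ ^ 2} with hBp
  set N : Set Ω := (⋃ j, (Bup j ∪ Blo j)) ∪ ⋃ i, ⋃ j, (if i = j then (∅ : Set Ω) else Bp i j)
    with hN
  have hBupMeas : ∀ j, MeasurableSet (Bup j) :=
    fun j => measurableSet_le measurable_const (((hmeas j).norm).pow_const 2)
  have hBloMeas : ∀ j, MeasurableSet (Blo j) :=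
    fun j => measurableSet_le (((hmeas j).norm).pow_const 2) measurable_const
  have hBpMeas : ∀ i j, MeasurableSet (Bp i j) :=
    fun i j => measurableSet_le ((((hmeas i).sub (hmeas j)).norm).pow_const 2) measurable_const
  have hNmeas : MeasurableSet N := by
    apply MeasurableSet.union
    · exact MeasurableSet.iUnion fun j => (hBupMeas j).union (hBloMeas j)
    · refine MeasurableSet.iUnion fun i => MeasurableSet.iUnion fun j => ?_
      split_ifs
      · exact MeasurableSet.empty
      · exact hBpMeas i j
  -- the good event is contained in the target
  have hsub : Nᶜ ⊆ {ω | (∀ j : Fin M, 1 - δ ≤ ‖X j ω‖ ^ 2 / R₀ ^ 2 ∧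
      ‖X j ω‖ ^ 2 / R₀ ^ 2 ≤ 1 + δ) ∧ ∀ i j : Fin M, i ≠ j →
      ⟪X i ω, X j ω⟫ / (R₀ * ‖X j ω‖) < Real.sqrt (1 - δ)} := by
    intro ω hω
    simp only [hN, Set.compl_union, Set.compl_iUnion, Set.mem_inter_iff, Set.mem_iInter,
      Set.mem_compl_iff] at hω
    obtain ⟨h1, h2⟩ := hω
    have hn1 : ∀ j : Fin M, ‖X j ω‖ ^ 2 < (1 + δ) * R₀ ^ 2 := by
      intro j
      have := h1 j
      simp only [Set.mem_union, not_or, hBup, hBlo, Set.mem_setOf_eq] at this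
      linarith [not_le.mp this.1]
    have hn2 : ∀ j : Fin M, (1 - δ) * R₀ ^ 2 < ‖X j ω‖ ^ 2 := by
      intro j
      have := h1 j
      simp only [Set.mem_union, not_or, hBup, hBlo, Set.mem_setOf_eq] at this
      linarith [not_le.mp this.2]
    have hn3 : ∀ i j : Fin M, i ≠ j → 3 * δ * R₀ ^ 2 < ‖X i ω - X j ω‖ ^ 2 := by
      intro i j hij
      have := h2 i j
      rw [if_neg hij] at this
      simp only [hBp, Set.mem_setOf_eq] at this
      linarith [not_le.mp this]
    have hR₀sq : (0:ℝ) < R₀ ^ 2 := by positivity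
    have h1δ : (0:ℝ) < 1 - δ := by linarith
    constructor
    · intro j
      constructor
      · rw [le_div_iff₀ hR₀sq]
        linarith [hn2 j]
      · rw [div_le_iff₀ hR₀sq]
        linarith [hn1 j]
    · intro i j hij
      set u : ℝ := Real.sqrt (1 - δ) with hu
      set v : ℝ := Real.sqrt (1 + δ) with hv
      have hu2 : u ^ 2 = 1 - δ := Real.sq_sqrt h1δ.le
      have hv2 : v ^ 2 = 1 + δ := Real.sq_sqrt (by linarith)
      have hu0 : 0 < u := Real.sqrt_pos.mpr h1δ
      have hv0 : 0 < v := Real.sqrt_pos.mpr (by linarith)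
      have hs0 : 0 < ‖X j ω‖ := by
        have h := hn2 j
        have := norm_nonneg (X j ω)
        nlinarith
      have hsu : u * R₀ < ‖X j ω‖ := by
        have hlt : (u * R₀) ^ 2 < ‖X j ω‖ ^ 2 := by
          rw [mul_pow, hu2]
          linarith [hn2 j]
        exact lt_of_pow_lt_pow_left₀ 2 (norm_nonneg _) hlt
      have hsv : ‖X j ω‖ < v * R₀ := by
        have hlt : ‖X j ω‖ ^ 2 < (v * R₀) ^ 2 := by
          rw [mul_pow, hv2]
          linarith [hn1 j]
        exact lt_of_pow_lt_pow_left₀ 2 (by positivity) hlt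
      have huv : 2 - δ ≤ 2 * (u * v) := by
        have huvs : u * v = Real.sqrt ((1 - δ) * (1 + δ)) := (Real.sqrt_mul h1δ.le _).symm
        have hle : (2 - δ) / 2 ≤ Real.sqrt ((1 - δ) * (1 + δ)) := by
          rw [show (2 - δ) / 2 = Real.sqrt (((2 - δ) / 2) ^ 2) from
            (Real.sqrt_sq (by linarith)).symm]
          apply Real.sqrt_le_sqrt
          nlinarith
        rw [huvs]
        linarith
      have h4 : (v - u) ^ 2 ≤ δ := by nlinarith
      have hkey : (‖X j ω‖ - u * R₀) ^ 2 ≤ δ * R₀ ^ 2 := by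
        have h0' : 0 ≤ ‖X j ω‖ - u * R₀ := by linarith
        have h1' : ‖X j ω‖ - u * R₀ ≤ (v - u) * R₀ := by nlinarith
        calc (‖X j ω‖ - u * R₀) ^ 2 ≤ ((v - u) * R₀) ^ 2 := by
              exact pow_le_pow_left₀ h0' h1' 2
          _ = (v - u) ^ 2 * R₀ ^ 2 := by ring
          _ ≤ δ * R₀ ^ 2 := mul_le_mul_of_nonneg_right h4 (sq_nonneg R₀)
      have hkey' : ‖X j ω‖ ^ 2 + (1 - 2 * δ) * R₀ ^ 2 ≤ 2 * u * R₀ * ‖X j ω‖ := by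
        nlinarith [hkey, hu2, sq_nonneg R₀]
      have hns := norm_sub_sq_real (X i ω) (X j ω)
      rw [div_lt_iff₀ (by positivity : (0:ℝ) < R₀ * ‖X j ω‖)]
      nlinarith [hn3 i j hij, hn1 i, hkey', hns]
  -- probability of the bad set
  have hPN : P N ≤ (M : ℝ≥0∞) * (ENNReal.ofReal e₁ + ENNReal.ofReal e₁)
      + (M : ℝ≥0∞) * (((M - 1 : ℕ) : ℝ≥0∞) * ENNReal.ofReal e₂) := by
    rw [hN]
    refine (measure_union_le _ _).trans (add_le_add ?_ ?_)
    · refine (measure_iUnion_fintype_le _ _).trans ?_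
      calc ∑ j, P (Bup j ∪ Blo j) ≤ ∑ _j : Fin M, (ENNReal.ofReal e₁ + ENNReal.ofReal e₁) := by
            refine Finset.sum_le_sum fun j _ => ?_
            exact (measure_union_le _ _).trans (add_le_add (hPup j) (hPlo j))
        _ = (M : ℝ≥0∞) * (ENNReal.ofReal e₁ + ENNReal.ofReal e₁) := by
            rw [Finset.sum_const, Finset.card_univ, Fintype.card_fin, nsmul_eq_mul]
    · refine (measure_iUnion_fintype_le _ _).trans ?_
      calc ∑ i, P (⋃ j, if i = j then (∅ : Set Ω) else Bp i j)
          ≤ ∑ _i : Fin M, (((M - 1 : ℕ) : ℝ≥0∞) * ENNReal.ofReal e₂) := by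
            refine Finset.sum_le_sum fun i _ => ?_
            refine (measure_iUnion_fintype_le _ _).trans ?_
            calc ∑ j, P (if i = j then (∅ : Set Ω) else Bp i j)
                ≤ ∑ j, (if i = j then (0 : ℝ≥0∞) else ENNReal.ofReal e₂) := by
                  refine Finset.sum_le_sum fun j _ => ?_
                  split_ifs with hij
                  · simp
                  · exact hPpair i j hij
              _ = ((M - 1 : ℕ) : ℝ≥0∞) * ENNReal.ofReal e₂ := by
                  rw [Finset.sum_ite]
                  simp only [Finset.sum_const_zero, zero_add, Finset.sum_const, nsmul_eq_mul]
                  have hfe : (Finset.univ.filter fun j : Fin M => ¬ i = j)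
                      = Finset.univ.erase i := by
                    ext j
                    simp [Finset.mem_erase, ne_comm, eq_comm]
                  rw [hfe, Finset.card_erase_of_mem (Finset.mem_univ i), Finset.card_univ,
                    Fintype.card_fin]
        _ = (M : ℝ≥0∞) * (((M - 1 : ℕ) : ℝ≥0∞) * ENNReal.ofReal e₂) := by
            rw [Finset.sum_const, Finset.card_univ, Fintype.card_fin, nsmul_eq_mul]
  -- final assembly
  have h0e₁ : 0 ≤ e₁ := by rw [he₁]; positivity
  have h0e₂ : 0 ≤ e₂ := by rw [he₂]; positivity
  set C : ℝ≥0∞ := (M : ℝ≥0∞) * (ENNReal.ofReal e₁ + ENNReal.ofReal e₁)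
      + (M : ℝ≥0∞) * (((M - 1 : ℕ) : ℝ≥0∞) * ENNReal.ofReal e₂) with hC
  have hCne : C ≠ ⊤ := by
    rw [hC]
    refine ENNReal.add_ne_top.mpr ⟨?_, ?_⟩
    · exact ENNReal.mul_ne_top (ENNReal.natCast_ne_top _)
        (ENNReal.add_ne_top.mpr ⟨ENNReal.ofReal_ne_top, ENNReal.ofReal_ne_top⟩)
    · exact ENNReal.mul_ne_top (ENNReal.natCast_ne_top _)
        (ENNReal.mul_ne_top (ENNReal.natCast_ne_top _) ENNReal.ofReal_ne_top)
  have hCt : C.toReal = (M:ℝ) * (e₁ + e₁) + (M:ℝ) * (((M:ℝ) - 1) * e₂) := by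
    rw [hC, ENNReal.toReal_add (ENNReal.mul_ne_top (ENNReal.natCast_ne_top _)
        (ENNReal.add_ne_top.mpr ⟨ENNReal.ofReal_ne_top, ENNReal.ofReal_ne_top⟩))
        (ENNReal.mul_ne_top (ENNReal.natCast_ne_top _)
        (ENNReal.mul_ne_top (ENNReal.natCast_ne_top _) ENNReal.ofReal_ne_top)),
      ENNReal.toReal_mul, ENNReal.toReal_mul, ENNReal.toReal_mul,
      ENNReal.toReal_add ENNReal.ofReal_ne_top ENNReal.ofReal_ne_top,
      ENNReal.toReal_ofReal h0e₁, ENNReal.toReal_ofReal h0e₂,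
      ENNReal.toReal_natCast, ENNReal.toReal_natCast, Nat.cast_sub hM, Nat.cast_one]
  have hPNt : (P N).toReal ≤ C.toReal := ENNReal.toReal_mono hCne hPN
  have hcompl : (P Nᶜ).toReal = 1 - (P N).toReal := by
    rw [prob_compl_eq_one_sub hNmeas,
      ENNReal.toReal_sub_of_le prob_le_one ENNReal.one_ne_top, ENNReal.toReal_one]
  have htarget : (P Nᶜ).toReal ≤
      (P {ω | (∀ j : Fin M, 1 - δ ≤ ‖X j ω‖ ^ 2 / R₀ ^ 2 ∧ ‖X j ω‖ ^ 2 / R₀ ^ 2 ≤ 1 + δ) ∧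
        ∀ i j : Fin M, i ≠ j →
          ⟪X i ω, X j ω⟫ / (R₀ * ‖X j ω‖) < Real.sqrt (1 - δ)}).toReal :=
    ENNReal.toReal_mono (measure_ne_top _ _) (measure_mono hsub)
  rw [ge_iff_le]
  have hring : (M:ℝ) * (e₁ + e₁) + (M:ℝ) * (((M:ℝ) - 1) * e₂)
      = 2 * (M:ℝ) * e₁ + (M:ℝ) * ((M:ℝ) - 1) * e₂ := by ring
  linarith [hPNt, hcompl, htarget, hCt, hring]
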